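/- Let T > 0, L > 0, ε > 0, β > 0, ν ≥ 1, t̂ ∈ [0,T). Let ξ̂_{t̂}, γ̂_{t̂} ∈ Λ_{t̂}, let (t_i)_{i≥0} ⊆ [t̂,T] and paths γⁱ_{t_i} ∈ Λ_{t_i} with sup_i ‖γⁱ_{t_i}‖_0 < ∞, and let W_1 : Λ → ℝ satisfy |W_1(γ_t) − W_1(η_s)| ≤ L(1+‖γ_t‖_0+‖η_s‖_0)|s−t|^{1/2} + L‖γ_t−η_s‖_0 for all (t,γ_t), (s,η_s) ∈ [0,T]×Λ. Define, for (t,γ_t) ∈ [t̂,T]×Λ^{t̂}: w_1(γ_t) = W_1(γ_t) − 2⁵β Υ(γ_t, ξ̂_{t̂}) − ε((νT−t)/(νT)) Υ(γ_t) − ε Ῡ(γ_t, γ̂_{t̂}) − Σ_{i=0}^∞ 2^{-i} Ῡ(γⁱ_{t_i}, γ_t). Then for all t̂ ≤ t ≤ s ≤ T and γ_t ∈ Λ^{t̂}: w_1(γ_t) − w_1(γ_{t,s}) ≤ (2L(1+‖γ_t‖_0) + (2ε+4)T^{3/2}) |s−t|^{1/2}. -/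

import Mathlib

set_option linter.unusedVariables false

noncomputable section

open Set Filter Topology

namespace PHJB

/-- Euclidean state space ℝ^d. -/
abbrev E (d : ℕ) : Type := EuclideanSpace ℝ (Fin d)

variable {d n : ℕ}

/-- `‖γ_t - η_s‖₀ = sup_{0 ≤ l ≤ t ∨ s} |γ_t(l ∧ t) - η_s(l ∧ s)|`. -/
def pairDist (t : ℝ) (γ : ℝ → E d) (s : ℝ) (η : ℝ → E d) : ℝ :=
  sSup ((fun l => ‖γ (min l t) - η (min l s)‖) '' Icc 0 (max t s))

/-- `‖γ_t‖₀ = sup_{0 ≤ s ≤ t} |γ_t(s)|`. -/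
def supNorm (t : ℝ) (γ : ℝ → E d) : ℝ :=
  sSup ((fun l => ‖γ l‖) '' Icc 0 t)

/-- `d_∞(γ_t, η_s) = |t - s| + ‖γ_t - η_s‖₀`. -/
def dInfty (t : ℝ) (γ : ℝ → E d) (s : ℝ) (η : ℝ → E d) : ℝ :=
  |t - s| + pairDist t γ s η

/-- `γ` is càdlàg on `[0,t]`. -/
def IsCadlagOn (t : ℝ) (γ : ℝ → E d) : Prop :=
  (∀ s ∈ Ico (0:ℝ) t, ContinuousWithinAt γ (Ici s) s) ∧
  (∀ s ∈ Ioc (0:ℝ) t, ∃ L, Tendsto γ (nhdsWithin s (Iio s)) (nhds L))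

/-- `γ` is continuous on `[0,t]`. -/
def IsContOn (t : ℝ) (γ : ℝ → E d) : Prop :=
  ContinuousOn γ (Icc 0 t)

/-- `(t, γ)` represents an element `γ_t` of `Λ̂^{tBase}` (horizon `T`). -/
def MemHat (T tBase : ℝ) (t : ℝ) (γ : ℝ → E d) : Prop :=
  tBase ≤ t ∧ t ≤ T ∧ IsCadlagOn t γ

/-- `(t, γ)` represents an element `γ_t` of `Λ^{tBase}` (horizon `T`). -/
def Mem (T tBase : ℝ) (t : ℝ) (γ : ℝ → E d) : Prop :=
  tBase ≤ t ∧ t ≤ T ∧ IsContOn t γ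

/-- The functional `S_m(γ_t, η_s)`. -/
def Sm (m : ℕ) (t : ℝ) (γ : ℝ → E d) (s : ℝ) (η : ℝ → E d) : ℝ :=
  if pairDist t γ s η = 0 then 0
  else (pairDist t γ s η ^ (2*m) - ‖γ t - η s‖ ^ (2*m)) ^ 3 / pairDist t γ s η ^ (4*m)

/-- `Υ^{m,M}(γ_t, η_s) = S_m(γ_t,η_s) + M |γ_t(t) - η_s(s)|^{2m}`. -/
def Ups (m : ℕ) (M : ℝ) (t : ℝ) (γ : ℝ → E d) (s : ℝ) (η : ℝ → E d) : ℝ :=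
  Sm m t γ s η + M * ‖γ t - η s‖ ^ (2*m)

/-- `Ῡ^{m,M}(γ_t, η_s) = Υ^{m,M}(γ_t,η_s) + |s - t|²`. -/
def UpsBar (m : ℕ) (M : ℝ) (t : ℝ) (γ : ℝ → E d) (s : ℝ) (η : ℝ → E d) : ℝ :=
  Ups m M t γ s η + (s - t) ^ 2

/-- `Υ^{m,M}(γ_t) = Υ^{m,M}(γ_t, 0_t)`. -/
def Ups0 (m : ℕ) (M : ℝ) (t : ℝ) (γ : ℝ → E d) : ℝ :=
  Ups m M t γ t (fun _ => 0)

/-- Restriction of a raw function to the values it takes on `[0,t]` (the path `γ_t`,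
or its horizontal extension to any later time). -/
def clamp (t : ℝ) (γ : ℝ → E d) : ℝ → E d := fun s => γ (min (max s 0) t)

/-- The horizontal extension `γ_{t,·}` of `γ_t`, as a raw function. -/
def hext (t : ℝ) (γ : ℝ → E d) : ℝ → E d := fun l => γ (min l t)

/-- The vertically bumped path `γ_t^x`. -/
def vbump (t : ℝ) (γ : ℝ → E d) (x : E d) : ℝ → E d :=
  fun s => if s = t then γ t + x else γ s

/-- The standard basis of ℝ^d. -/
def basis (d : ℕ) (i : Fin d) : E d := EuclideanSpace.single i (1:ℝ)

/-- A path functional only depends on the restriction of the path to `[0,t]`. -/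
def Adapted (T tBase : ℝ) (f : ℝ → (ℝ → E d) → ℝ) : Prop :=
  ∀ t γ, MemHat T tBase t γ → f t γ = f t (clamp t γ)

/-- `f ∈ C⁰(Λ̂^{tBase})`: continuity with respect to `d_∞`. -/
def C0Hat (T tBase : ℝ) (f : ℝ → (ℝ → E d) → ℝ) : Prop :=
  ∀ t γ, MemHat T tBase t γ → ∀ ε > 0, ∃ δ > 0, ∀ s η, MemHat T tBase s η →
    dInfty t γ s η < δ → |f s η - f t γ| < ε

/-- `f ∈ C⁰(Λ^{tBase})`: continuity with respect to `d_∞` on continuous paths. -/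
def C0Lam (T tBase : ℝ) (f : ℝ → (ℝ → E d) → ℝ) : Prop :=
  ∀ t γ, Mem T tBase t γ → ∀ ε > 0, ∃ δ > 0, ∀ s η, Mem T tBase s η →
    dInfty t γ s η < δ → |f s η - f t γ| < ε

/-- Polynomial growth in `‖·‖₀`. -/
def PolyGrowth (T tBase : ℝ) (f : ℝ → (ℝ → E d) → ℝ) : Prop :=
  ∃ C : ℝ, ∃ k : ℕ, 0 ≤ C ∧ ∀ t γ, MemHat T tBase t γ →
    |f t γ| ≤ C * (1 + supNorm t γ) ^ k

/-- An element of `C_p^{1,2}(Λ̂^{tBase})`: a functional `F` together with its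
horizontal derivative `Ft`, and first and second vertical derivatives `Fx`, `Fxx`,
all continuous in `d_∞` and of polynomial growth. -/
structure C12pHat (d : ℕ) (T tBase : ℝ) where
  F : ℝ → (ℝ → E d) → ℝ
  Ft : ℝ → (ℝ → E d) → ℝ
  Fx : ℝ → (ℝ → E d) → E d
  Fxx : ℝ → (ℝ → E d) → Matrix (Fin d) (Fin d) ℝ
  adapted : Adapted T tBase F
  contF : C0Hat T tBase F
  vert : ∀ t γ, MemHat T tBase t γ → ∀ i : Fin d,
    HasDerivAt (fun h : ℝ => F t (vbump t γ (h • basis d i))) (Fx t γ i) 0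
  vert2 : ∀ t γ, MemHat T tBase t γ → ∀ i j : Fin d,
    HasDerivAt (fun h : ℝ => Fx t (vbump t γ (h • basis d j)) i) (Fxx t γ j i) 0
  horiz : ∀ t γ, MemHat T tBase t γ → t < T →
    Tendsto (fun h : ℝ => (F (t + h) (clamp t γ) - F t γ) / h)
      (nhdsWithin 0 (Ioi 0)) (nhds (Ft t γ))
  horizT : ∀ γ, MemHat T tBase T γ →
    Tendsto (fun s => Ft s (clamp s γ)) (nhdsWithin T (Iio T)) (nhds (Ft T γ))
  contFt : C0Hat T tBase Ft
  contFx : ∀ i : Fin d, C0Hat T tBase fun t γ => Fx t γ i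
  contFxx : ∀ i j : Fin d, C0Hat T tBase fun t γ => Fxx t γ i j
  growthF : PolyGrowth T tBase F
  growthFt : PolyGrowth T tBase Ft
  growthFx : ∀ i : Fin d, PolyGrowth T tBase fun t γ => Fx t γ i
  growthFxx : ∀ i j : Fin d, PolyGrowth T tBase fun t γ => Fxx t γ i j

/-- Hilbert–Schmidt (Frobenius) norm of a matrix. -/
def frob {k l : ℕ} (A : Matrix (Fin k) (Fin l) ℝ) : ℝ :=
  Real.sqrt (∑ i, ∑ j, (A i j) ^ 2)

/-- Identification of `Fin k → ℝ` with `EuclideanSpace ℝ (Fin k)`. -/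
def toEuc {k : ℕ} (v : Fin k → ℝ) : E k := (WithLp.equiv 2 (Fin k → ℝ)).symm v

/-- The Hamiltonian
`H(γ_t,r,p,l) = sup_u [⟨p, b⟩ + ½ tr(l σ σ^⊤) + q(γ_t, r, σ^⊤ p, u)]`. -/
def hamiltonian (U : Type*) (b : ℝ → (ℝ → E d) → U → E d)
    (σ' : ℝ → (ℝ → E d) → U → Matrix (Fin d) (Fin n) ℝ)
    (q : ℝ → (ℝ → E d) → ℝ → E n → U → ℝ)
    (t : ℝ) (γ : ℝ → E d) (r : ℝ) (p : E d) (l : Matrix (Fin d) (Fin d) ℝ) : ℝ :=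
  ⨆ u : U, ((∑ i, p i * b t γ u i)
    + (1/2) * Matrix.trace (l * (σ' t γ u * (σ' t γ u).transpose))
    + q t γ r (toEuc ((σ' t γ u).transpose.mulVec (fun i => p i))) u)

/-- Hypothesis 2.1 on the coefficients, with Lipschitz/growth constant `L`. -/
structure Hyp (T : ℝ) {d n : ℕ} (U : Type*) [MetricSpace U] (L : ℝ)
    (b : ℝ → (ℝ → E d) → U → E d)
    (σ' : ℝ → (ℝ → E d) → U → Matrix (Fin d) (Fin n) ℝ)
    (q : ℝ → (ℝ → E d) → ℝ → E n → U → ℝ)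
    (φ : (ℝ → E d) → ℝ) : Prop where
  hL : 0 < L
  cont_b : ∀ t γ u, Mem T 0 t γ → ∀ ε > 0, ∃ δ > 0, ∀ s η v, Mem T 0 s η →
    dInfty t γ s η + dist u v < δ → ‖b s η v - b t γ u‖ < ε
  cont_σ : ∀ t γ u, Mem T 0 t γ → ∀ ε > 0, ∃ δ > 0, ∀ s η v, Mem T 0 s η →
    dInfty t γ s η + dist u v < δ → frob (σ' s η v - σ' t γ u) < ε
  cont_q : ∀ t γ (y : ℝ) (z : E n) u, Mem T 0 t γ → ∀ ε > 0, ∃ δ > 0,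
    ∀ s η (y' : ℝ) (z' : E n) v, Mem T 0 s η →
      dInfty t γ s η + |y' - y| + ‖z' - z‖ + dist u v < δ →
      |q s η y' z' v - q t γ y z u| < ε
  cont_φ : ∀ γ, IsContOn T γ → ∀ ε > 0, ∃ δ > 0, ∀ η, IsContOn T η →
    pairDist T γ T η < δ → |φ η - φ γ| < ε
  bound_b : ∀ t γ u, Mem T 0 t γ → ‖b t γ u‖ ^ 2 ≤ L ^ 2 * (1 + supNorm t γ ^ 2)
  bound_σ : ∀ t γ u, Mem T 0 t γ → frob (σ' t γ u) ^ 2 ≤ L ^ 2 * (1 + supNorm t γ ^ 2)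
  lip_b : ∀ t γ γ' u, Mem T 0 t γ → Mem T 0 t γ' →
    ‖b t γ u - b t γ' u‖ ≤ L * pairDist t γ t γ'
  lip_σ : ∀ t γ γ' u, Mem T 0 t γ → Mem T 0 t γ' →
    frob (σ' t γ u - σ' t γ' u) ≤ L * pairDist t γ t γ'
  bound_q : ∀ t γ y z u, Mem T 0 t γ → |q t γ y z u| ≤ L * (1 + supNorm t γ + |y| + ‖z‖)
  lip_q : ∀ t γ γ' y y' z z' u, Mem T 0 t γ → Mem T 0 t γ' →
    |q t γ y z u - q t γ' y' z' u| ≤ L * (pairDist t γ t γ' + |y - y'| + ‖z - z'‖)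
  lip_φ : ∀ γ η, IsContOn T γ → IsContOn T η → |φ γ - φ η| ≤ L * pairDist T γ T η

/-- `Φ ∈ A⁺(γ_t, w)`: `0 = (w - Φ)(γ_t) = sup_{[t,T]×Λ} (w - Φ)`. -/
def InAplus (T t : ℝ) (w : ℝ → (ℝ → E d) → ℝ) (γ : ℝ → E d) (Φ : C12pHat d T t) : Prop :=
  w t γ - Φ.F t γ = 0 ∧ ∀ s η, Mem T t s η → w s η - Φ.F s η ≤ 0

/-- `Φ ∈ A⁻(γ_t, w)`: `0 = (w + Φ)(γ_t) = inf_{[t,T]×Λ} (w + Φ)`. -/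
def InAminus (T t : ℝ) (w : ℝ → (ℝ → E d) → ℝ) (γ : ℝ → E d) (Φ : C12pHat d T t) : Prop :=
  w t γ + Φ.F t γ = 0 ∧ ∀ s η, Mem T t s η → 0 ≤ w s η + Φ.F s η

/-- Viscosity subsolution of the PHJB equation. -/
def IsViscSubsol (T : ℝ) (U : Type*)
    (b : ℝ → (ℝ → E d) → U → E d)
    (σ' : ℝ → (ℝ → E d) → U → Matrix (Fin d) (Fin n) ℝ)
    (q : ℝ → (ℝ → E d) → ℝ → E n → U → ℝ)
    (φ : (ℝ → E d) → ℝ)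
    (w : ℝ → (ℝ → E d) → ℝ) : Prop :=
  (∀ γ, IsContOn T γ → w T γ ≤ φ γ) ∧
  ∀ t γ, Mem T 0 t γ → t < T → ∀ Φ : C12pHat d T t,
    InAplus T t w γ Φ →
    0 ≤ Φ.Ft t γ + hamiltonian U b σ' q t γ (Φ.F t γ) (Φ.Fx t γ) (Φ.Fxx t γ)

/-- Viscosity supersolution of the PHJB equation. -/
def IsViscSupersol (T : ℝ) (U : Type*)
    (b : ℝ → (ℝ → E d) → U → E d)
    (σ' : ℝ → (ℝ → E d) → U → Matrix (Fin d) (Fin n) ℝ)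
    (q : ℝ → (ℝ → E d) → ℝ → E n → U → ℝ)
    (φ : (ℝ → E d) → ℝ)
    (w : ℝ → (ℝ → E d) → ℝ) : Prop :=
  (∀ γ, IsContOn T γ → φ γ ≤ w T γ) ∧
  ∀ t γ, Mem T 0 t γ → t < T → ∀ Φ : C12pHat d T t,
    InAminus T t w γ Φ →
    -Φ.Ft t γ + hamiltonian U b σ' q t γ (-(Φ.F t γ)) (-(Φ.Fx t γ)) (-(Φ.Fxx t γ)) ≤ 0

/-- Gauge-type function on `Λ^{tBase}`. -/
def IsGaugeType (T tBase : ℝ) (ρ : ℝ → (ℝ → E d) → ℝ → (ℝ → E d) → ℝ) : Prop :=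
  (∀ t γ s η, Mem T tBase t γ → Mem T tBase s η → 0 ≤ ρ t γ s η) ∧
  (∀ t γ s η, Mem T tBase t γ → Mem T tBase s η → ∀ ε > 0, ∃ δ > 0,
    ∀ t' γ' s' η', Mem T tBase t' γ' → Mem T tBase s' η' →
      dInfty t γ t' γ' + dInfty s η s' η' < δ →
      |ρ t' γ' s' η' - ρ t γ s η| < ε) ∧
  (∀ s γ, Mem T tBase s γ → ρ s γ s γ = 0) ∧
  (∀ ε > 0, ∃ δ > 0, ∀ s γ l η, Mem T tBase s γ → Mem T tBase l η →
    ρ s γ l η ≤ δ → dInfty s γ l η < ε)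

/-- Upper semicontinuity (w.r.t. `d_∞`) of a path functional. -/
def PathUSC (T tBase : ℝ) (w : ℝ → (ℝ → E d) → ℝ) : Prop :=
  ∀ t γ, Mem T tBase t γ → ∀ c, w t γ < c → ∃ δ > 0, ∀ s η, Mem T tBase s η →
    dInfty t γ s η < δ → w s η < c

/-- Bounded from above. -/
def BddAbovePath (T tBase : ℝ) (w : ℝ → (ℝ → E d) → ℝ) : Prop :=
  ∃ B, ∀ t γ, Mem T tBase t γ → w t γ ≤ B

/-- `limsup_{‖γ_t‖₀ → ∞} w(γ_t)/‖γ_t‖₀ < 0`. -/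
def NegAtInfty (T : ℝ) (w : ℝ → (ℝ → E d) → ℝ) : Prop :=
  ∃ c > 0, ∃ R : ℝ, ∀ t γ, Mem T 0 t γ → R ≤ supNorm t γ → w t γ ≤ -c * supNorm t γ

/-- The function `w̃^{t̂}` of Definition 5.4. -/
def tilde (T tBase : ℝ) (w : ℝ → (ℝ → E d) → ℝ) : ℝ → E d → ℝ := fun t x =>
  if tBase ≤ t then sSup {r | ∃ ξ, Mem T tBase t ξ ∧ ξ t = x ∧ r = w t ξ}
  else sSup {r | ∃ ξ, Mem T tBase tBase ξ ∧ ξ tBase = x ∧ r = w tBase ξ} - Real.sqrt (tBase - t)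

/-- Upper semicontinuous envelope (on `[0,T] × ℝ^d`). -/
def uscEnv (T : ℝ) (g : ℝ → E d → ℝ) : ℝ → E d → ℝ := fun t x =>
  Filter.limsup (fun p : ℝ × E d => g p.1 p.2)
    (nhdsWithin (t, x) ((Icc (0:ℝ) T) ×ˢ (univ : Set (E d))))

/-- A local modulus of continuity. -/
def IsLocalModulus (ρ₁ : ℝ → ℝ → ℝ) : Prop :=
  Continuous (Function.uncurry ρ₁) ∧
  (∀ r, 0 ≤ r → ρ₁ 0 r = 0) ∧
  (∀ a r, 0 ≤ a → 0 ≤ r → 0 ≤ ρ₁ a r) ∧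
  (∀ a b r, 0 ≤ a → 0 ≤ b → 0 ≤ r → ρ₁ (a + b) r ≤ ρ₁ a r + ρ₁ b r) ∧
  (∀ a r r', 0 ≤ a → 0 ≤ r → r ≤ r' → ρ₁ a r ≤ ρ₁ a r')

/-- `(g, gt, gx, gxx)` is a `C^{1,2}` function on `[0,T] × ℝ^d` together with its
time derivative, spatial gradient and spatial Hessian. -/
def IsC12On (T : ℝ) (g gt : ℝ → E d → ℝ) (gx : ℝ → E d → E d)
    (gxx : ℝ → E d → Matrix (Fin d) (Fin d) ℝ) : Prop :=
  Continuous (fun p : ℝ × E d => g p.1 p.2) ∧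
  Continuous (fun p : ℝ × E d => gt p.1 p.2) ∧
  Continuous (fun p : ℝ × E d => gx p.1 p.2) ∧
  Continuous (fun p : ℝ × E d => gxx p.1 p.2) ∧
  (∀ t x, HasDerivAt (fun s => g s x) (gt t x) t) ∧
  (∀ t x (i : Fin d), HasDerivAt (fun h : ℝ => g t (x + h • basis d i)) (gx t x i) 0) ∧
  (∀ t x (i j : Fin d),
    HasDerivAt (fun h : ℝ => gx t (x + h • basis d j) i) (gxx t x j i) 0)

/-- The class `Φ(t̂, x̂)` of Definition 5.3. -/
def InPhiClass (T : ℝ) (that : ℝ) (xhat : E d) (f : ℝ → E d → ℝ) : Prop :=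
  ∃ r > 0, ∀ L > 0, ∀ g gt gx gxx, IsC12On T g gt gx gxx →
    ∃ C > 0, ∀ t x, 0 < t → t < T →
      (∀ s y, 0 ≤ s → s ≤ T → f s y - g s y ≤ f t x - g t x) →
      (|t - that| + ‖x - xhat‖ < r ∧ |f t x| + ‖gx t x‖ + frob (gxx t x) ≤ L) →
      C ≤ gt t x

/-- Bounded and uniformly continuous path functional on `Λ̂^{tBase}`. -/
def UCBoundedHat (T tBase : ℝ) (f : ℝ → (ℝ → E d) → ℝ) : Prop :=
  (∃ B, ∀ t γ, MemHat T tBase t γ → |f t γ| ≤ B) ∧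
  ∀ ε > 0, ∃ δ > 0, ∀ t γ s η, MemHat T tBase t γ → MemHat T tBase s η →
    dInfty t γ s η < δ → |f t γ - f s η| < ε

/-- Basis of ℝ^d × ℝ^d indexed by `Fin d ⊕ Fin d`. -/
def basisProd (d : ℕ) (v : Fin d ⊕ Fin d) : E d × E d :=
  Sum.elim (fun i => (basis d i, 0)) (fun j => (0, basis d j)) v

/-- The full Hessian `∇²φ` of `φ : ℝ^d × ℝ^d → ℝ` as a `(2d) × (2d)` matrix. -/
def hess2 (φ : E d × E d → ℝ) (p : E d × E d) :
    Matrix (Fin d ⊕ Fin d) (Fin d ⊕ Fin d) ℝ :=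
  Matrix.of fun v w => fderiv ℝ (fun x => fderiv ℝ φ x (basisProd d w)) p (basisProd d v)

/-- `∇_{x₁}φ`. -/
def grad1 (φ : E d × E d → ℝ) (p : E d × E d) : E d :=
  toEuc (fun i => fderiv ℝ φ p (basisProd d (Sum.inl i)))

/-- `∇_{x₂}φ`. -/
def grad2 (φ : E d × E d → ℝ) (p : E d × E d) : E d :=
  toEuc (fun i => fderiv ℝ φ p (basisProd d (Sum.inr i)))

/-- Operator norm of a matrix, acting on Euclidean space. -/
def matOpNorm {ι : Type*} [Fintype ι] [DecidableEq ι] (A : Matrix ι ι ℝ) : ℝ :=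
  ‖LinearMap.toContinuousLinearMap (Matrix.toEuclideanLin A)‖

/-- Matrix order `A ≤ B` in the sense of quadratic forms. -/
def matLE {ι : Type*} [Fintype ι] (A B : Matrix ι ι ℝ) : Prop :=
  (B - A).PosSemidef


/-- The state-dependent Hamiltonian `H̄(t,x,r,p,l)`. -/
def hamBar (U : Type*) {d n : ℕ} (bbar : ℝ → E d → U → E d)
    (σbar : ℝ → E d → U → Matrix (Fin d) (Fin n) ℝ)
    (qbar : ℝ → E d → ℝ → E n → U → ℝ)
    (t : ℝ) (x : E d) (r : ℝ) (p : E d) (l : Matrix (Fin d) (Fin d) ℝ) : ℝ :=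
  ⨆ u : U, ((∑ i, p i * bbar t x u i)
    + (1/2) * Matrix.trace (l * (σbar t x u * (σbar t x u).transpose))
    + qbar t x r (toEuc ((σbar t x u).transpose.mulVec (fun i => p i))) u)

/-! ### Auxiliary lemmas for Statement 17 -/

lemma image_Icc_eq_of_const {f : ℝ → ℝ} {a b : ℝ} (h0 : 0 ≤ a) (hab : a ≤ b)
    (hf : ∀ l, a ≤ l → f l = f a) : f '' Icc 0 b = f '' Icc 0 a := by
  apply Set.Subset.antisymm
  · rintro x ⟨l, ⟨hl0, hlb⟩, rfl⟩
    rcases le_or_gt l a with h | h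
    · exact ⟨l, ⟨hl0, h⟩, rfl⟩
    · exact ⟨a, ⟨h0, le_refl a⟩, (hf l h.le).symm⟩
  · exact Set.image_mono (Icc_subset_Icc le_rfl hab)

lemma hext_min {d : ℕ} {t s : ℝ} (hts : t ≤ s) (γ : ℝ → E d) (l : ℝ) :
    hext t γ (min l s) = γ (min l t) := by
  unfold hext
  rw [min_assoc, min_eq_right hts]

lemma hext_end {d : ℕ} {t s : ℝ} (hts : t ≤ s) (γ : ℝ → E d) :
    hext t γ s = γ t := by
  unfold hext; rw [min_eq_right hts]

lemma pairDist_hext_left {d : ℕ} {t s r : ℝ} (hts : t ≤ s) (h0 : 0 ≤ max t r)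
    (γ η : ℝ → E d) : pairDist s (hext t γ) r η = pairDist t γ r η := by
  unfold pairDist
  have hfun : (fun l => ‖hext t γ (min l s) - η (min l r)‖)
      = fun l => ‖γ (min l t) - η (min l r)‖ := funext fun l => by rw [hext_min hts]
  rw [hfun]
  congr 1
  have hmax : max t r ≤ max s r := max_le_max hts le_rfl
  rw [show max s r = max (max t r) (max s r) from (max_eq_right hmax).symm] at *
  exact image_Icc_eq_of_const h0 hmax (fun l hl => by
    rw [min_eq_right ((le_max_left t r).trans hl), min_eq_right ((le_max_right t r).trans hl),
      min_eq_right (le_max_left t r), min_eq_right (le_max_right t r)])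

lemma pairDist_hext_right {d : ℕ} {t s r : ℝ} (hts : t ≤ s) (h0 : 0 ≤ max r t)
    (γ η : ℝ → E d) : pairDist r η s (hext t γ) = pairDist r η t γ := by
  unfold pairDist
  have hfun : (fun l => ‖η (min l r) - hext t γ (min l s)‖)
      = fun l => ‖η (min l r) - γ (min l t)‖ := funext fun l => by rw [hext_min hts]
  rw [hfun]
  congr 1
  have hmax : max r t ≤ max r s := max_le_max le_rfl hts
  exact image_Icc_eq_of_const h0 hmax (fun l hl => by
    rw [min_eq_right ((le_max_left r t).trans hl), min_eq_right ((le_max_right r t).trans hl),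
      min_eq_right (le_max_left r t), min_eq_right (le_max_right r t)])

lemma Ups_hext_left {d : ℕ} {t s r : ℝ} (hts : t ≤ s) (h0 : 0 ≤ max t r)
    (γ η : ℝ → E d) (m : ℕ) (M : ℝ) : Ups m M s (hext t γ) r η = Ups m M t γ r η := by
  unfold Ups Sm
  rw [pairDist_hext_left hts h0, hext_end hts]

lemma Ups_hext_right {d : ℕ} {t s r : ℝ} (hts : t ≤ s) (h0 : 0 ≤ max r t)
    (γ η : ℝ → E d) (m : ℕ) (M : ℝ) : Ups m M r η s (hext t γ) = Ups m M r η t γ := by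
  unfold Ups Sm
  rw [pairDist_hext_right hts h0, hext_end hts]

lemma Ups0_hext {d : ℕ} {t s : ℝ} (h0 : 0 ≤ t) (hts : t ≤ s) (γ : ℝ → E d)
    (m : ℕ) (M : ℝ) : Ups0 m M s (hext t γ) = Ups0 m M t γ := by
  unfold Ups0 Ups Sm
  have hpd : pairDist s (hext t γ) s (fun _ => (0:E d)) = pairDist t γ t (fun _ => 0) := by
    unfold pairDist
    rw [max_self, max_self]
    have hfun1 : (fun l => ‖hext t γ (min l s) - (fun _ => (0:E d)) (min l s)‖)
        = fun l => ‖γ (min l t) - (0:E d)‖ := funext fun l => by rw [hext_min hts]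
    have hfun2 : (fun l => ‖γ (min l t) - (fun _ => (0:E d)) (min l t)‖)
        = fun l => ‖γ (min l t) - (0:E d)‖ := funext fun l => rfl
    rw [hfun1, hfun2]
    exact congrArg sSup (image_Icc_eq_of_const h0 hts
      (f := fun l => ‖γ (min l t) - (0:E d)‖)
      (fun l hl => by
        show ‖γ (min l t) - (0:E d)‖ = ‖γ (min t t) - (0:E d)‖
        rw [min_eq_right hl, min_self]))
  rw [hpd, hext_end hts]

lemma hext_IsContOn {d : ℕ} {t s : ℝ} (ht : 0 ≤ t) {γ : ℝ → E d} (hγ : IsContOn t γ) :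
    IsContOn s (hext t γ) := by
  unfold IsContOn hext
  exact hγ.comp ((continuous_id.min continuous_const).continuousOn)
    (fun l hl => ⟨le_min hl.1 ht, min_le_right _ _⟩)

lemma supNorm_hext {d : ℕ} {t s : ℝ} (ht : 0 ≤ t) (hts : t ≤ s) (γ : ℝ → E d) :
    supNorm s (hext t γ) = supNorm t γ := by
  unfold supNorm
  have h1 : (fun l => ‖hext t γ l‖) '' Icc 0 s = (fun l => ‖hext t γ l‖) '' Icc 0 t :=
    image_Icc_eq_of_const ht hts (fun l hl => by
      unfold hext; rw [min_eq_right hl, min_self])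
  rw [h1]
  congr 1
  exact Set.image_congr fun l hl => by unfold hext; rw [min_eq_left hl.2]

lemma pairDist_hext_self {d : ℕ} {t s : ℝ} (ht : 0 ≤ t) (hts : t ≤ s) (γ : ℝ → E d) :
    pairDist t γ s (hext t γ) = 0 := by
  unfold pairDist
  have himg : (fun l => ‖γ (min l t) - hext t γ (min l s)‖) '' Icc 0 (max t s) = {0} := by
    apply Set.Subset.antisymm
    · rintro x ⟨l, hl, rfl⟩
      simp [hext_min hts]
    · rintro x hx
      rw [Set.mem_singleton_iff] at hx
      subst hx
      exact ⟨0, ⟨le_rfl, le_max_of_le_left ht⟩, by simp [hext_min hts]⟩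
  rw [himg, csSup_singleton]

lemma supNorm_nonneg {d : ℕ} (t : ℝ) (γ : ℝ → E d) : 0 ≤ supNorm t γ :=
  Real.sSup_nonneg (by rintro x ⟨l, _, rfl⟩; exact norm_nonneg _)

lemma supNorm_bddAbove {d : ℕ} {t : ℝ} {γ : ℝ → E d} (hγ : IsContOn t γ) :
    BddAbove ((fun l => ‖γ l‖) '' Icc 0 t) :=
  (isCompact_Icc.image_of_continuousOn hγ.norm).bddAbove

lemma norm_le_supNorm {d : ℕ} {t l : ℝ} {γ : ℝ → E d} (hγ : IsContOn t γ)
    (hl : l ∈ Icc (0:ℝ) t) : ‖γ l‖ ≤ supNorm t γ :=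
  le_csSup (supNorm_bddAbove hγ) ⟨l, hl, rfl⟩

lemma pairDist_bddAbove {d : ℕ} {t s : ℝ} {γ η : ℝ → E d} (ht : 0 ≤ t) (hs : 0 ≤ s)
    (hγ : IsContOn t γ) (hη : IsContOn s η) :
    BddAbove ((fun l => ‖γ (min l t) - η (min l s)‖) '' Icc 0 (max t s)) := by
  have h1 : ContinuousOn (fun l => γ (min l t)) (Icc 0 (max t s)) :=
    hγ.comp ((continuous_id.min continuous_const).continuousOn)
      (fun l hl => ⟨le_min hl.1 ht, min_le_right _ _⟩)
  have h2 : ContinuousOn (fun l => η (min l s)) (Icc 0 (max t s)) :=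
    hη.comp ((continuous_id.min continuous_const).continuousOn)
      (fun l hl => ⟨le_min hl.1 hs, min_le_right _ _⟩)
  exact (isCompact_Icc.image_of_continuousOn (h1.sub h2).norm).bddAbove

lemma endpoint_le_pairDist {d : ℕ} {t s : ℝ} {γ η : ℝ → E d} (ht : 0 ≤ t) (hs : 0 ≤ s)
    (hγ : IsContOn t γ) (hη : IsContOn s η) :
    ‖γ t - η s‖ ≤ pairDist t γ s η := by
  apply le_csSup (pairDist_bddAbove ht hs hγ hη)
  refine ⟨max t s, ⟨le_max_of_le_left ht, le_rfl⟩, ?_⟩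
  show ‖γ (min (max t s) t) - η (min (max t s) s)‖ = ‖γ t - η s‖
  rw [min_eq_right (le_max_left t s), min_eq_right (le_max_right t s)]

lemma pairDist_le_add {d : ℕ} {t s : ℝ} {γ η : ℝ → E d} (ht : 0 ≤ t) (hs : 0 ≤ s)
    (hγ : IsContOn t γ) (hη : IsContOn s η) :
    pairDist t γ s η ≤ supNorm t γ + supNorm s η := by
  apply Real.sSup_le
  · rintro x ⟨l, ⟨hl0, _⟩, rfl⟩
    calc ‖γ (min l t) - η (min l s)‖ ≤ ‖γ (min l t)‖ + ‖η (min l s)‖ := norm_sub_le _ _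
      _ ≤ supNorm t γ + supNorm s η :=
        add_le_add (norm_le_supNorm hγ ⟨le_min hl0 ht, min_le_right _ _⟩)
          (norm_le_supNorm hη ⟨le_min hl0 hs, min_le_right _ _⟩)
  · exact add_nonneg (supNorm_nonneg _ _) (supNorm_nonneg _ _)

lemma Sm_nonneg' {d : ℕ} {t s : ℝ} {γ η : ℝ → E d} {m : ℕ}
    (he : ‖γ t - η s‖ ≤ pairDist t γ s η) : 0 ≤ Sm m t γ s η := by
  unfold Sm
  split
  · exact le_rfl
  · apply div_nonneg _ (pow_nonneg ((norm_nonneg _).trans he) _)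
    exact pow_nonneg (sub_nonneg.2 (pow_le_pow_left₀ (norm_nonneg _) he _)) 3

lemma abs_Sm_le {d : ℕ} {t s : ℝ} {γ η : ℝ → E d} {m : ℕ} (hm : 0 < m)
    (he : ‖γ t - η s‖ ≤ pairDist t γ s η) :
    |Sm m t γ s η| ≤ pairDist t γ s η ^ (2*m) := by
  set P := pairDist t γ s η with hPdef
  set e := ‖γ t - η s‖ with hedef
  have he0 : 0 ≤ e := norm_nonneg _
  have hP0 : 0 ≤ P := he0.trans he
  rw [abs_of_nonneg (Sm_nonneg' he)]
  unfold Sm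
  rw [← hPdef, ← hedef]
  by_cases hP : P = 0
  · rw [if_pos hP, hP]
    rw [zero_pow (by omega : 2*m ≠ 0)]
  · rw [if_neg hP]
    have hPpos : 0 < P := hP0.lt_of_ne (Ne.symm hP)
    have h1 : e ^ (2*m) ≤ P ^ (2*m) := pow_le_pow_left₀ he0 he _
    have h2 : 0 ≤ P ^ (2*m) - e ^ (2*m) := sub_nonneg.2 h1
    rw [div_le_iff₀ (pow_pos hPpos _)]
    calc (P ^ (2*m) - e ^ (2*m)) ^ 3 ≤ (P ^ (2*m)) ^ 3 :=
          pow_le_pow_left₀ h2 (by nlinarith [pow_nonneg he0 (2*m)]) 3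
      _ = P ^ (2*m) * P ^ (4*m) := by
          rw [← pow_mul, ← pow_add]; congr 1; ring

lemma abs_Ups_le {d : ℕ} {t s : ℝ} {γ η : ℝ → E d} {K : ℝ}
    (ht : 0 ≤ t) (hs : 0 ≤ s) (hγ : IsContOn t γ) (hη : IsContOn s η)
    (hK : pairDist t γ s η ≤ K) :
    |Ups 3 3 t γ s η| ≤ 4 * K ^ 6 := by
  have he := endpoint_le_pairDist ht hs hγ hη
  have hP0 : (0:ℝ) ≤ pairDist t γ s η := (norm_nonneg _).trans he
  have hK0 : 0 ≤ K := hP0.trans hK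
  have hSm : |Sm 3 t γ s η| ≤ K ^ 6 := by
    calc |Sm 3 t γ s η| ≤ pairDist t γ s η ^ (2*3) := abs_Sm_le (by norm_num) he
      _ ≤ K ^ (2*3) := pow_le_pow_left₀ hP0 hK _
      _ = K ^ 6 := by norm_num
  have he6 : ‖γ t - η s‖ ^ (2*3) ≤ K ^ 6 := by
    calc ‖γ t - η s‖ ^ (2*3) ≤ K ^ (2*3) := pow_le_pow_left₀ (norm_nonneg _) (he.trans hK) _
      _ = K ^ 6 := by norm_num
  unfold Ups
  calc |Sm 3 t γ s η + 3 * ‖γ t - η s‖ ^ (2*3)|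
      ≤ |Sm 3 t γ s η| + 3 * ‖γ t - η s‖ ^ (2*3) := by
        have : (0:ℝ) ≤ 3 * ‖γ t - η s‖ ^ (2*3) := by positivity
        calc _ ≤ |Sm 3 t γ s η| + |3 * ‖γ t - η s‖ ^ (2*3)| := abs_add_le _ _
          _ = _ := by rw [abs_of_nonneg this]
    _ ≤ K ^ 6 + 3 * K ^ 6 := add_le_add hSm (by linarith)
    _ = 4 * K ^ 6 := by ring

lemma Ups_nonneg' {d : ℕ} {t s : ℝ} {γ η : ℝ → E d}
    (he : ‖γ t - η s‖ ≤ pairDist t γ s η) : 0 ≤ Ups 3 3 t γ s η := by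
  unfold Ups
  have := Sm_nonneg' (m := 3) he
  positivity

set_option maxHeartbeats 2000000 in
/-- time-shift estimate for the auxiliary functional `w₁`. -/
theorem auxiliary_w1_time_shift_estimate
    {d : ℕ} (T L ε β ν : ℝ) (hT : 0 < T) (hL : 0 < L) (hε : 0 < ε) (hβ : 0 < β)
    (hν : 1 ≤ ν)
    (that : ℝ) (hthat0 : 0 ≤ that) (hthatT : that < T)
    (ξhat γhat : ℝ → E d) (hξ : IsContOn that ξhat) (hγhat : IsContOn that γhat)
    (ts : ℕ → ℝ) (gs : ℕ → ℝ → E d)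
    (hts : ∀ i, that ≤ ts i ∧ ts i ≤ T) (hgs : ∀ i, IsContOn (ts i) (gs i))
    (hbd : ∃ B, ∀ i, supNorm (ts i) (gs i) ≤ B)
    (W1 : ℝ → (ℝ → E d) → ℝ)
    (hW1 : ∀ t γ s η, Mem T 0 t γ → Mem T 0 s η →
      |W1 t γ - W1 s η| ≤
        L * (1 + supNorm t γ + supNorm s η) * Real.sqrt |s - t| + L * pairDist t γ s η) :
    ∀ t s γ, that ≤ t → t ≤ s → s ≤ T → Mem T that t γ →
      (W1 t γ - 2 ^ 5 * β * Ups 3 3 t γ that ξhat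
          - ε * ((ν * T - t) / (ν * T)) * Ups0 3 3 t γ
          - ε * UpsBar 3 3 t γ that γhat
          - ∑' i : ℕ, (1/2 : ℝ) ^ i * UpsBar 3 3 (ts i) (gs i) t γ)
        - (W1 s (hext t γ) - 2 ^ 5 * β * Ups 3 3 s (hext t γ) that ξhat
          - ε * ((ν * T - s) / (ν * T)) * Ups0 3 3 s (hext t γ)
          - ε * UpsBar 3 3 s (hext t γ) that γhat
          - ∑' i : ℕ, (1/2 : ℝ) ^ i * UpsBar 3 3 (ts i) (gs i) s (hext t γ))
      ≤ (2 * L * (1 + supNorm t γ) + (2 * ε + 4) * T ^ ((3:ℝ)/2)) * Real.sqrt (s - t) := by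
  
  intro t s γ h1 h2 h3 hmem
  obtain ⟨_, htT, hγc⟩ := hmem
  have ht0 : 0 ≤ t := hthat0.trans h1
  have hs0 : 0 ≤ s := ht0.trans h2
  have hst0 : 0 ≤ s - t := sub_nonneg.2 h2
  have hγbar : IsContOn s (hext t γ) := hext_IsContOn ht0 hγc
  set S := supNorm t γ with hS
  have hS0 : 0 ≤ S := supNorm_nonneg _ _
  have hsq0 : 0 ≤ Real.sqrt (s - t) := Real.sqrt_nonneg _
  -- W1 estimate
  have hmem1 : Mem T 0 t γ := ⟨ht0, htT, hγc⟩
  have hmem2 : Mem T 0 s (hext t γ) := ⟨hs0, h3, hγbar⟩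
  have hW := hW1 t γ s (hext t γ) hmem1 hmem2
  rw [pairDist_hext_self ht0 h2 γ, supNorm_hext ht0 h2 γ, abs_of_nonneg hst0] at hW
  have hA : W1 t γ - W1 s (hext t γ) ≤ 2 * L * (1 + S) * Real.sqrt (s - t) := by
    have h4 := le_abs_self (W1 t γ - W1 s (hext t γ))
    nlinarith [mul_nonneg hL.le hsq0]
  -- ξhat term
  have hB : Ups 3 3 s (hext t γ) that ξhat = Ups 3 3 t γ that ξhat :=
    Ups_hext_left h2 (le_max_of_le_left ht0) γ ξhat 3 3
  -- Ups0 term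
  have hY : Ups0 3 3 s (hext t γ) = Ups0 3 3 t γ := Ups0_hext ht0 h2 γ 3 3
  have hYnn : 0 ≤ Ups0 3 3 t γ := by
    have hz : IsContOn t (fun _ : ℝ => (0:E d)) := continuous_const.continuousOn
    have he := @endpoint_le_pairDist d t t γ (fun _ => (0:E d)) ht0 ht0 hγc hz
    unfold Ups0
    exact @Ups_nonneg' d t t γ (fun _ => (0:E d)) he
  have hνT : 0 < ν * T := by nlinarith
  have hC : ε * ((ν * T - s) / (ν * T)) * Ups0 3 3 t γ
      ≤ ε * ((ν * T - t) / (ν * T)) * Ups0 3 3 t γ := by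
    apply mul_le_mul_of_nonneg_right _ hYnn
    apply mul_le_mul_of_nonneg_left _ hε.le
    exact (div_le_div_iff_of_pos_right hνT).2 (by linarith)
  -- γhat term
  have hD : Ups 3 3 s (hext t γ) that γhat = Ups 3 3 t γ that γhat :=
    Ups_hext_left h2 (le_max_of_le_left ht0) γ γhat 3 3
  have hD2 : UpsBar 3 3 s (hext t γ) that γhat
      = Ups 3 3 t γ that γhat + (that - s) ^ 2 := by
    unfold UpsBar; rw [hD]
  have hD1 : UpsBar 3 3 t γ that γhat
      = Ups 3 3 t γ that γhat + (that - t) ^ 2 := rfl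
  -- sqrt estimates
  have hT32 : T ^ ((3:ℝ)/2) = T * Real.sqrt T := by
    rw [show (3:ℝ)/2 = 1 + 1/2 by norm_num, Real.rpow_add hT, Real.rpow_one,
      ← Real.sqrt_eq_rpow]
  have hsqle : Real.sqrt (s - t) ≤ Real.sqrt T := Real.sqrt_le_sqrt (by linarith)
  have hkey : T * (s - t) ≤ T ^ ((3:ℝ)/2) * Real.sqrt (s - t) := by
    rw [hT32]
    calc T * (s - t) = T * (Real.sqrt (s - t) * Real.sqrt (s - t)) := by
          rw [Real.mul_self_sqrt hst0]
      _ ≤ T * (Real.sqrt T * Real.sqrt (s - t)) := by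
          exact mul_le_mul_of_nonneg_left
            (mul_le_mul_of_nonneg_right hsqle hsq0) hT.le
      _ = T * Real.sqrt T * Real.sqrt (s - t) := by ring
  have hDq : (that - s) ^ 2 - (that - t) ^ 2
      ≤ 2 * (T ^ ((3:ℝ)/2) * Real.sqrt (s - t)) := by
    have h5 : (that - s) ^ 2 - (that - t) ^ 2 ≤ 2 * T * (s - t) := by
      nlinarith [mul_nonneg hst0 (show (0:ℝ) ≤ 2 * T - s - t + 2 * that by linarith)]
    linarith [hkey]
  have hepsD : ε * ((that - s) ^ 2 - (that - t) ^ 2)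
      ≤ ε * (2 * (T ^ ((3:ℝ)/2) * Real.sqrt (s - t))) :=
    mul_le_mul_of_nonneg_left hDq hε.le
  -- the tsum term
  obtain ⟨B, hBbd⟩ := hbd
  have hB0 : 0 ≤ B := (supNorm_nonneg _ _).trans (hBbd 0)
  have hts0 : ∀ i, 0 ≤ ts i := fun i => hthat0.trans (hts i).1
  have hei : ∀ i, ‖gs i (ts i) - γ t‖ ≤ pairDist (ts i) (gs i) t γ := fun i =>
    endpoint_le_pairDist (hts0 i) ht0 (hgs i) hγc
  have hUi : ∀ i, |Ups 3 3 (ts i) (gs i) t γ| ≤ 4 * (B + S) ^ 6 := fun i =>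
    abs_Ups_le (hts0 i) ht0 (hgs i) hγc
      (le_trans (pairDist_le_add (hts0 i) ht0 (hgs i) hγc)
        (add_le_add_left (hBbd i) S))
  have hUpsBs : ∀ i, UpsBar 3 3 (ts i) (gs i) s (hext t γ)
      = Ups 3 3 (ts i) (gs i) t γ + (s - ts i) ^ 2 := fun i => by
    unfold UpsBar
    rw [Ups_hext_right h2 (le_max_of_le_left (hts0 i)) γ (gs i) 3 3]
  have hUpsBt : ∀ i, UpsBar 3 3 (ts i) (gs i) t γ
      = Ups 3 3 (ts i) (gs i) t γ + (t - ts i) ^ 2 := fun i => rfl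
  set C := 4 * (B + S) ^ 6 + T ^ 2 with hCdef
  have habsT : ∀ i, |UpsBar 3 3 (ts i) (gs i) t γ| ≤ C := fun i => by
    rw [hUpsBt i]
    have h6 : (t - ts i) ^ 2 ≤ T ^ 2 :=
      sq_le_sq' (by linarith [(hts i).1, (hts i).2]) (by linarith [(hts i).1, hts0 i])
    calc |Ups 3 3 (ts i) (gs i) t γ + (t - ts i) ^ 2|
        ≤ |Ups 3 3 (ts i) (gs i) t γ| + |(t - ts i) ^ 2| := abs_add_le _ _
      _ ≤ 4 * (B + S) ^ 6 + T ^ 2 := by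
          rw [abs_of_nonneg (sq_nonneg (t - ts i))]
          exact add_le_add (hUi i) h6
  have habsS : ∀ i, |UpsBar 3 3 (ts i) (gs i) s (hext t γ)| ≤ C := fun i => by
    rw [hUpsBs i]
    have h6 : (s - ts i) ^ 2 ≤ T ^ 2 :=
      sq_le_sq' (by linarith [(hts i).1, (hts i).2]) (by linarith [(hts i).1, hts0 i])
    calc |Ups 3 3 (ts i) (gs i) t γ + (s - ts i) ^ 2|
        ≤ |Ups 3 3 (ts i) (gs i) t γ| + |(s - ts i) ^ 2| := abs_add_le _ _
      _ ≤ 4 * (B + S) ^ 6 + T ^ 2 := by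
          rw [abs_of_nonneg (sq_nonneg (s - ts i))]
          exact add_le_add (hUi i) h6
  have hsumgeo : Summable (fun i : ℕ => (1/2:ℝ) ^ i * C) :=
    summable_geometric_two.mul_right C
  have hsa : Summable (fun i : ℕ => (1/2:ℝ) ^ i * UpsBar 3 3 (ts i) (gs i) t γ) := by
    apply Summable.of_norm
    apply Summable.of_nonneg_of_le (fun i => norm_nonneg _) _ hsumgeo
    intro i
    rw [norm_mul, norm_pow]
    have : ‖(1/2:ℝ)‖ = 1/2 := by rw [Real.norm_eq_abs, abs_of_nonneg]; norm_num
    rw [this]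
    exact mul_le_mul_of_nonneg_left (habsT i) (by positivity)
  have hsb : Summable (fun i : ℕ => (1/2:ℝ) ^ i * UpsBar 3 3 (ts i) (gs i) s (hext t γ)) := by
    apply Summable.of_norm
    apply Summable.of_nonneg_of_le (fun i => norm_nonneg _) _ hsumgeo
    intro i
    rw [norm_mul, norm_pow]
    have : ‖(1/2:ℝ)‖ = 1/2 := by rw [Real.norm_eq_abs, abs_of_nonneg]; norm_num
    rw [this]
    exact mul_le_mul_of_nonneg_left (habsS i) (by positivity)
  have htsum : (∑' i : ℕ, (1/2:ℝ) ^ i * UpsBar 3 3 (ts i) (gs i) s (hext t γ))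
      - (∑' i : ℕ, (1/2:ℝ) ^ i * UpsBar 3 3 (ts i) (gs i) t γ)
      ≤ 4 * (T ^ ((3:ℝ)/2) * Real.sqrt (s - t)) := by
    rw [← Summable.tsum_sub hsb hsa]
    have hterm : ∀ i : ℕ, (1/2:ℝ) ^ i * UpsBar 3 3 (ts i) (gs i) s (hext t γ)
        - (1/2:ℝ) ^ i * UpsBar 3 3 (ts i) (gs i) t γ
        = (1/2:ℝ) ^ i * ((s - ts i) ^ 2 - (t - ts i) ^ 2) := fun i => by
      rw [hUpsBs i, hUpsBt i]; ring
    have hsd : Summable (fun i : ℕ => (1/2:ℝ) ^ i * ((s - ts i) ^ 2 - (t - ts i) ^ 2)) :=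
      (hsb.sub hsa).congr hterm
    calc (∑' i : ℕ, ((1/2:ℝ) ^ i * UpsBar 3 3 (ts i) (gs i) s (hext t γ)
          - (1/2:ℝ) ^ i * UpsBar 3 3 (ts i) (gs i) t γ))
        = ∑' i : ℕ, (1/2:ℝ) ^ i * ((s - ts i) ^ 2 - (t - ts i) ^ 2) := tsum_congr hterm
      _ ≤ ∑' i : ℕ, (1/2:ℝ) ^ i * (2 * T * (s - t)) := by
          apply Summable.tsum_le_tsum _ hsd (summable_geometric_two.mul_right _)
          intro i
          apply mul_le_mul_of_nonneg_left _ (by positivity)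
          nlinarith [mul_nonneg hst0
            (show (0:ℝ) ≤ 2 * T - s - t + 2 * ts i by linarith [(hts i).1, hts0 i, htT])]
      _ = 2 * (2 * T * (s - t)) := by rw [tsum_mul_right, tsum_geometric_two]
      _ ≤ 4 * (T ^ ((3:ℝ)/2) * Real.sqrt (s - t)) := by linarith [hkey]
  -- assemble
  rw [hB, hY, hD2, hD1]
  linarith [hA, hC, hepsD, htsum,
    (by ring : ε * (Ups 3 3 t γ that γhat + (that - t) ^ 2)
      = ε * Ups 3 3 t γ that γhat + ε * (that - t) ^ 2),
    (by ring : ε * (Ups 3 3 t γ that γhat + (that - s) ^ 2)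
      = ε * Ups 3 3 t γ that γhat + ε * (that - s) ^ 2),
    (by ring : ε * ((that - s) ^ 2 - (that - t) ^ 2)
      = ε * (that - s) ^ 2 - ε * (that - t) ^ 2),
    (by ring : (2 * L * (1 + S) + (2 * ε + 4) * T ^ ((3:ℝ)/2)) * Real.sqrt (s - t)
      = 2 * L * (1 + S) * Real.sqrt (s - t)
        + ε * (2 * (T ^ ((3:ℝ)/2) * Real.sqrt (s - t)))
        + 4 * (T ^ ((3:ℝ)/2) * Real.sqrt (s - t)))]
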